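/- arXiv:2412.18696 — 2 statements merged into one kernel-verified Lean document; each statement's English description precedes it below -/
import Mathlib

section
/- Let 2 ≤ k ≤ m be natural numbers, let 0 < α ≤ β be real numbers, and let M ⊂ ℝ³ be a finite set with |M| = m such that every subset D ⊆ M with |D| = k is α∼β-connected. Then M is (m − k + 1)∼β-dense; that is, for every z ∈ M there exists a subset M' ⊆ M \ {z} with |M'| = m − k + 1 such that every z' ∈ M' satisfies ‖z − z'‖ ≤ β. -/
/-- A finite set `D` is `α∼β`-connected if `α` is the minimum and `β` the maximum of its
set of pairwise distances. -/
def IsConnectedAB (α β : ℝ) (D : Finset (EuclideanSpace ℝ (Fin 3))) : Prop :=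
  (∀ x ∈ D, ∀ y ∈ D, x ≠ y → α ≤ ‖x - y‖ ∧ ‖x - y‖ ≤ β) ∧
  (∃ x ∈ D, ∃ y ∈ D, x ≠ y ∧ ‖x - y‖ = α) ∧
  (∃ x ∈ D, ∃ y ∈ D, x ≠ y ∧ ‖x - y‖ = β)

open scoped Classical

/-- A set `M` is `m∼ε`-dense if for every `z ∈ M` there are `m` points of `M \ {z}`
within distance `ε` of `z`. -/
def IsDense' (m : ℕ) (ε : ℝ) (M : Finset (EuclideanSpace ℝ (Fin 3))) : Prop :=
  ∀ z ∈ M, ∃ M' ⊆ M.erase z, M'.card = m ∧ ∀ z' ∈ M', ‖z - z'‖ ≤ ε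

theorem stmt1 (k m : ℕ) (hk : 2 ≤ k) (hkm : k ≤ m)
    (α β : ℝ) (hα : 0 < α) (hαβ : α ≤ β)
    (M : Finset (EuclideanSpace ℝ (Fin 3))) (hM : M.card = m)
    (hconn : ∀ D ⊆ M, D.card = k → IsConnectedAB α β D) :
    IsDense' (m - k + 1) β M := by
  intro z hz
  have hbound : ∀ z' ∈ M.erase z, ‖z - z'‖ ≤ β := by
    intro z' hz'
    have hne : z' ≠ z := Finset.ne_of_mem_erase hz'
    have hz'M : z' ∈ M := Finset.mem_of_mem_erase hz'
    have hsub : ({z, z'} : Finset (EuclideanSpace ℝ (Fin 3))) ⊆ M := by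
      intro x hx
      rcases Finset.mem_insert.mp hx with h | h
      · exact h ▸ hz
      · exact (Finset.mem_singleton.mp h) ▸ hz'M
    have hcard2 : ({z, z'} : Finset (EuclideanSpace ℝ (Fin 3))).card = 2 := by
      rw [Finset.card_insert_of_notMem (by simpa using hne.symm), Finset.card_singleton]
    obtain ⟨D, hDsub, hDM, hDcard⟩ :=
      Finset.exists_subsuperset_card_eq hsub (hcard2 ▸ hk) (hM ▸ hkm)
    have hconnD := hconn D hDM hDcard
    exact (hconnD.1 z (hDsub (by simp)) z' (hDsub (by simp)) hne.symm).2
  have hcard : m - k + 1 ≤ (M.erase z).card := by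
    rw [Finset.card_erase_of_mem hz, hM]; omega
  obtain ⟨M', hM'sub, hM'card⟩ := Finset.exists_subset_card_eq hcard
  exact ⟨M', hM'sub, hM'card, fun z' hz' => hbound z' (hM'sub hz')⟩
end

section
/- Let 2 ≤ k ≤ m be natural numbers, let 0 < α ≤ β be real numbers, and let M ⊂ ℝ³ be a finite set with |M| = m such that every subset D ⊆ M with |D| = k is α∼β-connected. Let ε > 0 and suppose m − k + 1 exceeds the ε-metric entropy N_ε(B(0, α, β)) of the closed annulus B(0, α, β) centered at the origin. Then M is not ε-separated; that is, there exist two distinct points x, y ∈ M with ‖x − y‖ < ε. -/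
/-- The closed annulus `B(z, κ, s) = {z' : κ ≤ ‖z - z'‖ ≤ s}`. -/
def annulus (z : EuclideanSpace ℝ (Fin 3)) (κ s : ℝ) : Set (EuclideanSpace ℝ (Fin 3)) :=
  {z' | κ ≤ ‖z - z'‖ ∧ ‖z - z'‖ ≤ s}

/-- A set is `ε`-separated if all pairwise distances are at least `ε`. -/
def IsEpsSeparated (ε : ℝ) (D : Set (EuclideanSpace ℝ (Fin 3))) : Prop :=
  ∀ x ∈ D, ∀ y ∈ D, x ≠ y → ε ≤ ‖x - y‖

/-- The `ε`-metric entropy of `X`: the maximum cardinality of an `ε`-separated finite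
subset of `X`. -/
noncomputable def metricEntropy (ε : ℝ) (X : Set (EuclideanSpace ℝ (Fin 3))) : ℕ :=
  sSup {n | ∃ D : Finset (EuclideanSpace ℝ (Fin 3)),
    ↑D ⊆ X ∧ IsEpsSeparated ε ↑D ∧ D.card = n}

lemma bdd_entropy_set (α β ε : ℝ) (hε : 0 < ε) :
    BddAbove {n | ∃ D : Finset (EuclideanSpace ℝ (Fin 3)),
      ↑D ⊆ annulus 0 α β ∧ IsEpsSeparated ε ↑D ∧ D.card = n} := by
  obtain ⟨t, htfin, htcov⟩ :=
    (Metric.totallyBounded_iff.mp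
      (isCompact_closedBall (0 : EuclideanSpace ℝ (Fin 3)) β).totallyBounded)
      (ε / 2) (by linarith)
  refine ⟨htfin.toFinset.card, ?_⟩
  rintro n ⟨D, hD, hsep, rfl⟩
  have hDb : ∀ x ∈ D, ∃ y ∈ htfin.toFinset, x ∈ Metric.ball y (ε / 2) := by
    intro x hx
    have hx' : x ∈ Metric.closedBall (0 : EuclideanSpace ℝ (Fin 3)) β := by
      have := (hD hx).2
      simp only [Metric.mem_closedBall, dist_eq_norm]
      simpa [norm_sub_rev] using this
    obtain ⟨y, hy, hxy⟩ := Set.mem_iUnion₂.mp (htcov hx')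
    exact ⟨y, htfin.mem_toFinset.mpr hy, hxy⟩
  choose f hf1 hf2 using hDb
  have : ∀ p : EuclideanSpace ℝ (Fin 3), ∀ hp : p ∈ D, True := fun _ _ => trivial
  classical
  refine Finset.card_le_card_of_injOn (fun x => if h : x ∈ D then f x h else 0) ?_ ?_
  · intro a ha; dsimp only; rw [dif_pos (Finset.mem_coe.mp ha)]; exact hf1 a ha
  · intro a ha b hb hab
    simp only [Finset.mem_coe] at ha hb
    replace hab : f a ha = f b hb := by simpa only [dif_pos ha, dif_pos hb] using hab
    by_contra hne
    have h1 := hf2 a ha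
    have h2 := hf2 b hb
    rw [hab] at h1
    have hlt : dist a b < ε := by
      calc dist a b ≤ dist a (f b hb) + dist (f b hb) b := dist_triangle _ _ _
        _ < ε / 2 + ε / 2 := by
            rw [Metric.mem_ball] at h1 h2
            rw [dist_comm (f b hb) b]; linarith
        _ = ε := by ring
    have hge := hsep a ha b hb hne
    rw [dist_eq_norm] at hlt
    linarith

theorem stmt2 (k m : ℕ) (hk : 2 ≤ k) (hkm : k ≤ m)
    (α β : ℝ) (hα : 0 < α) (hαβ : α ≤ β)
    (M : Finset (EuclideanSpace ℝ (Fin 3))) (hM : M.card = m)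
    (hconn : ∀ D ⊆ M, D.card = k → IsConnectedAB α β D)
    (ε : ℝ) (hε : 0 < ε)
    (hbig : metricEntropy ε (annulus 0 α β) < m - k + 1) :
    ∃ x ∈ M, ∃ y ∈ M, x ≠ y ∧ ‖x - y‖ < ε := by
  classical
  by_contra hcon
  push_neg at hcon
  -- every pair of distinct points of M has distance in [α, β]
  have hpair : ∀ x ∈ M, ∀ y ∈ M, x ≠ y → α ≤ ‖x - y‖ ∧ ‖x - y‖ ≤ β := by
    intro x hx y hy hxy
    have hsub : ({x, y} : Finset (EuclideanSpace ℝ (Fin 3))) ⊆ M := by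
      intro z hz; simp only [Finset.mem_insert, Finset.mem_singleton] at hz
      rcases hz with rfl | rfl <;> assumption
    have hcard2 : ({x, y} : Finset (EuclideanSpace ℝ (Fin 3))).card = 2 := by
      rw [Finset.card_insert_of_notMem (by simpa using hxy), Finset.card_singleton]
    obtain ⟨D, hsubD, hDM, hDcard⟩ :=
      Finset.exists_subsuperset_card_eq (n := k) hsub (by omega) (by omega)
    exact (hconn D hDM hDcard).1 x (hsubD (by simp)) y (hsubD (by simp)) hxy
  -- M is nonempty
  have hm2 : 2 ≤ m := le_trans hk hkm
  obtain ⟨z, hz⟩ := Finset.card_pos.mp (by omega : 0 < M.card)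
  -- build the translated set
  set D : Finset (EuclideanSpace ℝ (Fin 3)) := (M.erase z).image (fun x => z - x) with hD
  have hinj : Set.InjOn (fun x => z - x) (M.erase z : Set _) := by
    intro a _ b _ hab
    have : z - a = z - b := hab
    simpa using sub_right_inj.mp this
  have hDcard : D.card = m - 1 := by
    rw [hD, Finset.card_image_of_injOn hinj, Finset.card_erase_of_mem hz, hM]
  have hDsub : ↑D ⊆ annulus 0 α β := by
    intro w hw
    simp only [hD, Finset.coe_image, Set.mem_image, Finset.mem_coe] at hw
    obtain ⟨x, hx, rfl⟩ := hw
    have hxz : x ≠ z := Finset.ne_of_mem_erase hx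
    have hxM : x ∈ M := Finset.mem_of_mem_erase hx
    have := hpair z hz x hxM (Ne.symm hxz)
    show α ≤ ‖(0 : EuclideanSpace ℝ (Fin 3)) - (z - x)‖ ∧ ‖(0 : EuclideanSpace ℝ (Fin 3)) - (z - x)‖ ≤ β
    rw [zero_sub, norm_neg]
    exact this
  have hDsep : IsEpsSeparated ε ↑D := by
    intro a ha b hb hab
    simp only [hD, Finset.coe_image, Set.mem_image, Finset.mem_coe] at ha hb
    obtain ⟨x, hx, rfl⟩ := ha
    obtain ⟨y, hy, rfl⟩ := hb
    have hxy : x ≠ y := by rintro rfl; exact hab rfl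
    have h := hcon x (Finset.mem_of_mem_erase hx) y (Finset.mem_of_mem_erase hy) hxy
    have : z - x - (z - y) = y - x := by abel
    rw [this, norm_sub_rev]
    exact h
  have hmem : D.card ∈ {n | ∃ D : Finset (EuclideanSpace ℝ (Fin 3)),
      ↑D ⊆ annulus 0 α β ∧ IsEpsSeparated ε ↑D ∧ D.card = n} := ⟨D, hDsub, hDsep, rfl⟩
  have hle : D.card ≤ metricEntropy ε (annulus 0 α β) :=
    le_csSup (bdd_entropy_set α β ε hε) hmem
  rw [hDcard] at hle
  omega
end
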